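/- Every conformal derivation of CL(b,φ) is inner: if D_λ is a conformal derivation of CL(b,φ), then there exists an element g = Σ_{α∈Δ} g_α(∂)x_α of CL(b,φ) (a finite sum, g_α(∂) ∈ ℂ[∂]) such that D_λ = ad(g)_λ. In symbols, CDer(CL(b,φ)) = CInn(CL(b,φ)). -/

import Mathlib

/-- Evaluation of a two-variable polynomial `P(λ,∂) ∈ ℂ[λ,∂]` at `λ = l`, `∂ = d`. -/
noncomputable def ev2 (P : MvPolynomial (Fin 2) ℂ) (l d : ℂ) : ℂ :=
  MvPolynomial.eval ![l, d] P

/-- `B(α,β) = (1/b)(φ(α)β − φ(β)α + b(φ(α) − φ(β)))`. -/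
noncomputable def Bc (b : ℂ) {Δ : AddSubgroup ℂ} (φ : Δ →+ ℂ) (α β : Δ) : ℂ :=
  (1 / b) * (φ α * (β : ℂ) - φ β * (α : ℂ) + b * (φ α - φ β))

/-- Auxiliary: evaluating (at a point `l : ℂ`) a univariate polynomial obtained from a
bivariate polynomial by `aeval` into `ℂ[X]` is the same as a bivariate evaluation. -/
lemma evalaeval (P : MvPolynomial (Fin 2) ℂ) (v : Fin 2 → Polynomial ℂ) (l : ℂ) :
    (MvPolynomial.aeval v P).eval l = MvPolynomial.eval (fun i => (v i).eval l) P := by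
  rw [MvPolynomial.aeval_def, MvPolynomial.polynomial_eval_eval₂]
  have : ((Polynomial.evalRingHom l).comp (algebraMap ℂ (Polynomial ℂ))) = RingHom.id ℂ := by
    ext x; simp
  rw [this, MvPolynomial.eval₂_id]

open Polynomial in
/-- Every conformal derivation of `CL(b,φ)` is inner.  A conformal
derivation `D_λ` is recorded by its homogeneous components:
`D_λ(x_β) = Σ_α F α β (λ,∂) x_{α+β}`, where for each `β` only finitely many components
are nonzero (`hfin`), and each homogeneous component satisfies the derivation identity
`D_λ[x_β μ x_γ] = [(D_λ x_β) λ+μ x_γ] + [x_β μ (D_λ x_γ)]` written on the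
`x_{α+β+γ}`-component (`hder`, an identity of polynomials in `λ, μ, ∂` stated via
evaluation at all complex points).  The conclusion is that `D = ad(g)_λ` for
`g = Σ_α g_α(∂)x_α ∈ CL(b,φ)` (a finite sum), i.e.
`F α β (λ,∂) = g_α(−λ)((α+b)∂ + (α+β+2b)λ + B(α,β))`. -/
theorem stmt8 (Δ : AddSubgroup ℂ) (hΔinf : (Δ : Set ℂ).Infinite)
    (b : ℂ) (hb : 2 * b ∉ Δ) (φ : Δ →+ ℂ)
    (F : Δ → Δ → MvPolynomial (Fin 2) ℂ)
    (hfin : ∀ β : Δ, {α : Δ | F α β ≠ 0}.Finite)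
    (hder : ∀ α β γ : Δ, ∀ l m d : ℂ,
      (((β : ℂ) + b) * (d + l) + ((β : ℂ) + (γ : ℂ) + 2 * b) * m + Bc b φ β γ)
          * ev2 (F α (β + γ)) l d
        = ev2 (F α β) l (-l - m)
            * (((α : ℂ) + (β : ℂ) + b) * d
                + ((α : ℂ) + (β : ℂ) + (γ : ℂ) + 2 * b) * (l + m)
                + Bc b φ (α + β) γ)
          + ev2 (F α γ) l (m + d)
            * (((β : ℂ) + b) * d + ((α : ℂ) + (β : ℂ) + (γ : ℂ) + 2 * b) * m
                + Bc b φ β (α + γ))) :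
    ∃ g : Δ → Polynomial ℂ, {α : Δ | g α ≠ 0}.Finite ∧
      ∀ α β : Δ, ∀ l d : ℂ,
        ev2 (F α β) l d
          = (g α).eval (-l) * (((α : ℂ) + b) * d + ((α : ℂ) + (β : ℂ) + 2 * b) * l
              + Bc b φ α β) := by
  -- `b ≠ 0`, since otherwise `2b = 0 ∈ Δ`.
  have hb0 : b ≠ 0 := by
    intro h
    exact hb (by simpa [h] using Δ.zero_mem)
  -- `α + b ≠ 0` for `α ∈ Δ`, since otherwise `2b = -(α+α) ∈ Δ`.
  have hab : ∀ α : Δ, (α : ℂ) + b ≠ 0 := by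
    intro α h
    apply hb
    have h2 : (2 : ℂ) * b = -((α : ℂ) + (α : ℂ)) := by linear_combination 2 * h
    rw [h2]
    exact neg_mem (add_mem α.2 α.2)
  have hBc0 : ∀ β : Δ, Bc b φ β 0 = φ β := by
    intro β
    simp only [Bc, map_zero, ZeroMemClass.coe_zero]
    field_simp
    ring
  have hBcskew : ∀ α β : Δ, Bc b φ β α = -(Bc b φ α β) := by
    intro α β; simp only [Bc]; ring
  -- Key identity: specializing `γ = 0`, `m = -l-d` in the derivation identity gives
  -- `(bl + φ(α)) F_α(β)(l,d) = F_α(0)(l,-l) ((α+b)d + (α+β+2b)l + B(α,β))`.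
  have key : ∀ (α β : Δ) (l d : ℂ),
      (b * l + φ α) * ev2 (F α β) l d
        = ev2 (F α 0) l (-l) * (((α : ℂ) + b) * d + ((α : ℂ) + (β : ℂ) + 2 * b) * l
            + Bc b φ α β) := by
    intro α β l d
    have H := hder α β 0 l (-l - d) d
    rw [show (-l - (-l - d)) = d by ring, show (-l - d + d) = -l by ring] at H
    rw [add_zero, add_zero, hBc0, hBc0, hBcskew α β, map_add] at H
    simp only [ZeroMemClass.coe_zero] at H
    linear_combination -H
  -- The diagonal polynomial `h_α(l) = F_α(0)(l,-l)`.
  set hP : Δ → Polynomial ℂ := fun α => MvPolynomial.aeval ![X, -X] (F α 0) with hPdef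
  have hPeval : ∀ (α : Δ) (l : ℂ), (hP α).eval l = ev2 (F α 0) l (-l) := by
    intro α l
    rw [hPdef, evalaeval, ev2]
    have h2 : (fun i : Fin 2 => (![X, -X] i).eval l) = ![l, -l] := by
      funext i; fin_cases i <;> simp
    rw [h2]
  -- `h_α` has a root at `l₀ = -φ(α)/b`.
  have hroot : ∀ α : Δ, (hP α).IsRoot (-(φ α) / b) := by
    intro α
    set l₀ : ℂ := -(φ α) / b with hl₀
    set T : ℂ := ((α : ℂ) + ((0 : Δ) : ℂ) + 2 * b) * l₀ + Bc b φ α 0 with hT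
    have hk := key α 0 l₀ ((1 - T) / ((α : ℂ) + b))
    have hz : b * l₀ + φ α = 0 := by rw [hl₀]; field_simp; ring
    have hBr : ((α : ℂ) + b) * ((1 - T) / ((α : ℂ) + b)) + ((α : ℂ) + ((0 : Δ) : ℂ) + 2 * b) * l₀
        + Bc b φ α 0 = 1 := by
      rw [mul_div_cancel₀ _ (hab α)]
      rw [hT]; ring
    rw [hz, zero_mul, hBr, mul_one] at hk
    rw [IsRoot, hPeval]
    exact hk.symm
  -- Divide out the monic linear factor: `h_α = (X - l₀) q_α`.
  set q : Δ → Polynomial ℂ := fun α => (hP α) /ₘ (X - C (-(φ α) / b)) with hqdef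
  have hq : ∀ α : Δ, (X - C (-(φ α) / b)) * q α = hP α := fun α =>
    (Polynomial.mul_divByMonic_eq_iff_isRoot).mpr (hroot α)
  -- `g_α(λ) := b⁻¹ q_α(-λ)` does the job.
  refine ⟨fun α => (C b⁻¹ * q α).comp (-X), ?_, ?_⟩
  · apply (hfin 0).subset
    intro α hα
    simp only [Set.mem_setOf_eq] at hα ⊢
    intro h0
    apply hα
    have hP0 : hP α = 0 := by rw [hPdef]; simp [h0]
    rw [hqdef]
    simp [hP0, Polynomial.zero_divByMonic]
  · intro α β l d
    have hgeval : ((C b⁻¹ * q α).comp (-X)).eval (-l) = b⁻¹ * (q α).eval l := by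
      simp [Polynomial.eval_comp]
    rw [hgeval]
    -- For fixed `d`, both sides are polynomials in `l` which agree off `l₀`,
    -- hence agree everywhere (ℂ is infinite).
    set Pl : Polynomial ℂ := MvPolynomial.aeval ![X, C d] (F α β) with hPldef
    have hPleval : ∀ l' : ℂ, Pl.eval l' = ev2 (F α β) l' d := by
      intro l'
      rw [hPldef, evalaeval, ev2]
      have h2 : (fun i : Fin 2 => (![X, C d] i).eval l') = ![l', d] := by
        funext i; fin_cases i <;> simp
      rw [h2]
    set Br : Polynomial ℂ := C (((α : ℂ) + b) * d + Bc b φ α β)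
        + C ((α : ℂ) + (β : ℂ) + 2 * b) * X with hBrdef
    set Pd : Polynomial ℂ := Pl - C b⁻¹ * q α * Br with hPddef
    have hPdzero : Pd = 0 := by
      apply Polynomial.eq_zero_of_infinite_isRoot
      refine Set.Infinite.mono ?_ ((Set.finite_singleton (-(φ α) / b)).infinite_compl)
      intro l' hl'
      simp only [Set.mem_compl_iff, Set.mem_singleton_iff] at hl'
      simp only [Set.mem_setOf_eq, IsRoot]
      rw [hPddef]
      have hk := key α β l' d
      have hfac : b * l' + φ α = b * (l' - (-(φ α) / b)) := by field_simp; ring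
      have hh : ev2 (F α 0) l' (-l') = (l' - (-(φ α) / b)) * (q α).eval l' := by
        rw [← hPeval, ← hq α]; simp
      rw [hfac, hh] at hk
      have hne : l' - (-(φ α) / b) ≠ 0 := sub_ne_zero_of_ne hl'
      have hE : b * ev2 (F α β) l' d
          = (q α).eval l' * (((α : ℂ) + b) * d + ((α : ℂ) + (β : ℂ) + 2 * b) * l'
            + Bc b φ α β) :=
        mul_left_cancel₀ hne (by linear_combination hk)
      simp only [Polynomial.eval_sub, Polynomial.eval_mul, Polynomial.eval_add,
        Polynomial.eval_C, Polynomial.eval_X, hBrdef]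
      rw [hPleval l']
      rw [sub_eq_zero]
      field_simp
      linear_combination hE
    have h0 := congrArg (Polynomial.eval l) hPdzero
    rw [hPddef] at h0
    simp only [Polynomial.eval_sub, Polynomial.eval_mul, Polynomial.eval_add,
      Polynomial.eval_C, Polynomial.eval_X, Polynomial.eval_zero, hBrdef] at h0
    rw [hPleval l] at h0
    linear_combination h0
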